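/- Sound typing of equations: if Γ ⊢ S is derivable, then Γ ⊨ S, i.e., for every input map ρ_in and every partial output map ρ¹ ∈ ⟦Γ⟧_{ρ_in}, there exists a total output map ρ² such that (ρ_in, ρ¹·ρ²) ∈ ⟦S⟧. -/

import Mathlib

/-- Streams of optional integer values. -/
def RStream : Type := ℕ → Option ℤ

/-- `w₁` is less defined than `w₂`. -/
def LessDef (w₁ w₂ : RStream) : Prop := ∀ n, w₁ n = none ∨ w₁ n = w₂ n

/-- Last defined value of `w` at or before `n`. -/
def Last (w : RStream) : ℕ → Option ℤ
  | 0 => w 0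
  | n+1 => match w (n+1) with
    | some v => some v
    | none => Last w n

/-- Semantics of hold accesses. -/
def Hold (w : RStream) (n : ℕ) (v : Option ℤ) : Option ℤ :=
  match Last w n with
  | some u => some u
  | none => v

/-- Semantics of prev accesses. -/
def Prev (w : RStream) (n : ℕ) (v : Option ℤ) : Option ℤ :=
  match w n, n with
  | none, _ => none
  | some _, 0 => v
  | some _, m+1 =>
    match Last w m with
    | some u => some u
    | none => v

/-- Pacing annotations: positive boolean formulas over input variables. -/
inductive Pacing (Vi : Type) where
  | pvar (x : Vi)
  | top
  | pand (τ₁ τ₂ : Pacing Vi)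
  | por (τ₁ τ₂ : Pacing Vi)

/-- Denotation of pacing annotations as sets of time points. -/
def PacingDen {Vi : Type} (ρi : Vi → RStream) : Pacing Vi → Set ℕ
  | .pvar x => {n | ρi x n ≠ none}
  | .top => Set.univ
  | .pand τ₁ τ₂ => PacingDen ρi τ₁ ∩ PacingDen ρi τ₂
  | .por τ₁ τ₂ => PacingDen ρi τ₁ ∪ PacingDen ρi τ₂

/-- Semantic refinement of pacing annotations. -/
def Refines {Vi : Type} (τ τ' : Pacing Vi) : Prop :=
  ∀ ρi : Vi → RStream, PacingDen ρi τ ⊆ PacingDen ρi τ'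

/-- The set of τ-well-paced streams. -/
def WellPaced {Vi : Type} (τ : Pacing Vi) (ρi : Vi → RStream) : Set RStream :=
  {w | ∀ n, n ∈ PacingDen ρi τ ↔ w n ≠ none}

/-- Stream expressions over input variables `Vi` and output variables `Vo`. -/
inductive Expr (Vi Vo : Type) where
  | const (v : ℤ)
  | varIn (x : Vi)
  | varOut (x : Vo)
  | prevIn (x : Vi) (e : Expr Vi Vo)
  | prevOut (x : Vo) (e : Expr Vi Vo)
  | holdIn (x : Vi) (e : Expr Vi Vo)
  | holdOut (x : Vo) (e : Expr Vi Vo)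
  | add (e₁ e₂ : Expr Vi Vo)

/-- Addition propagating undefinedness. -/
def addOpt : Option ℤ → Option ℤ → Option ℤ
  | some a, some b => some (a + b)
  | _, _ => none

/-- Total denotational semantics of stream expressions. -/
def ExprDen {Vi Vo : Type} (ρi : Vi → RStream) (ρo : Vo → RStream) : Expr Vi Vo → RStream
  | .const v => fun _ => some v
  | .varIn x => ρi x
  | .varOut x => ρo x
  | .prevIn x e => fun n => Prev (ρi x) n (ExprDen ρi ρo e n)
  | .prevOut x e => fun n => Prev (ρo x) n (ExprDen ρi ρo e n)
  | .holdIn x e => fun n => Hold (ρi x) n (ExprDen ρi ρo e n)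
  | .holdOut x e => fun n => Hold (ρo x) n (ExprDen ρi ρo e n)
  | .add e₁ e₂ => fun n => addOpt (ExprDen ρi ρo e₁ n) (ExprDen ρi ρo e₂ n)

/-- A partial output stream, viewed as a stream (undefined entries are the always-none stream). -/
def getStream (o : Option RStream) : RStream := o.getD (fun _ => none)

/-- Partial semantics of stream expressions w.r.t. a partial output map. -/
def PExprDen {Vi Vo : Type} (ρi : Vi → RStream) (ρo : Vo → Option RStream) : Expr Vi Vo → RStream
  | .const v => fun _ => some v
  | .varIn x => ρi x
  | .varOut x => getStream (ρo x)
  | .prevIn x e => fun n => Prev (ρi x) n (PExprDen ρi ρo e n)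
  | .prevOut x e => fun n => Prev (getStream (ρo x)) n (PExprDen ρi ρo e n)
  | .holdIn x e => fun n => Hold (ρi x) n (PExprDen ρi ρo e n)
  | .holdOut x e => fun n => Hold (getStream (ρo x)) n (PExprDen ρi ρo e n)
  | .add e₁ e₂ => fun n => addOpt (PExprDen ρi ρo e₁ n) (PExprDen ρi ρo e₂ n)

/-- Totalization of a partial output map by a total one. -/
def totalize {Vo : Type} (ρ₁ : Vo → Option RStream) (ρ₂ : Vo → RStream) : Vo → RStream :=
  fun x => (ρ₁ x).getD (ρ₂ x)

/-- An annotated stream equation `x @ τ := e`. -/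
structure Equ (Vi Vo : Type) where
  out : Vo
  pac : Pacing Vi
  expr : Expr Vi Vo

/-- Satisfaction of a single equation. -/
def SatEq {Vi Vo : Type} (eq : Equ Vi Vo) (ρi : Vi → RStream) (ρo : Vo → RStream) : Prop :=
  ρo eq.out ∈ WellPaced eq.pac ρi ∧ LessDef (ρo eq.out) (ExprDen ρi ρo eq.expr)

/-- Satisfaction of a specification (a list of equations). -/
def SatSpec {Vi Vo : Type} (S : List (Equ Vi Vo)) (ρi : Vi → RStream) (ρo : Vo → RStream) : Prop :=
  ∀ eq ∈ S, SatEq eq ρi ρo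

/-- Consistency: every input map admits a satisfying output map. -/
def Consistent {Vi Vo : Type} (S : List (Equ Vi Vo)) : Prop :=
  ∀ ρi : Vi → RStream, ∃ ρo : Vo → RStream, SatSpec S ρi ρo

/-- Typing contexts. -/
def Ctx (Vi Vo : Type) : Type := Vo → Option (Pacing Vi)

/-- Interpretation of typing contexts as sets of partial output maps. -/
def InCtx {Vi Vo : Type} (Γ : Ctx Vi Vo) (ρi : Vi → RStream) (ρo : Vo → Option RStream) : Prop :=
  ∀ x, (Γ x = none ∧ ρo x = none) ∨
    ∃ τ w, Γ x = some τ ∧ ρo x = some w ∧ w ∈ WellPaced τ ρi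

/-- Typing rules for expressions. -/
inductive HasTy {Vi Vo : Type} (Γ : Ctx Vi Vo) : Expr Vi Vo → Pacing Vi → Prop where
  | const {v : ℤ} {τ} : HasTy Γ (.const v) τ
  | binop {e₁ e₂ τ} : HasTy Γ e₁ τ → HasTy Γ e₂ τ → HasTy Γ (.add e₁ e₂) τ
  | directOut {x τcan τ} : Γ x = some τcan → Refines τ τcan → HasTy Γ (.varOut x) τ
  | directIn {x τ} : Refines τ (.pvar x) → HasTy Γ (.varIn x) τ
  | prevOut {x τcan e τ} : Γ x = some τcan → HasTy Γ e τ → Refines τ τcan →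
      HasTy Γ (.prevOut x e) τ
  | prevIn {x e τ} : HasTy Γ e τ → Refines τ (.pvar x) → HasTy Γ (.prevIn x e) τ
  | holdOut {x e τ} : (Γ x).isSome → HasTy Γ e τ → HasTy Γ (.holdOut x e) τ
  | holdIn {x e τ} : HasTy Γ e τ → HasTy Γ (.holdIn x e) τ

/-- Typing rules for specifications. -/
inductive SpecTy {Vi Vo : Type} [DecidableEq Vo] : Ctx Vi Vo → List (Equ Vi Vo) → Prop where
  | empty {Γ} : SpecTy Γ []
  | equation {Γ x τ e S} : Γ x = none → HasTy Γ e τ →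
      SpecTy (Function.update Γ x (some τ)) S → SpecTy Γ (⟨x, τ, e⟩ :: S)

/-- Semantic typing of expressions. -/
def SemTyExpr {Vi Vo : Type} (Γ : Ctx Vi Vo) (e : Expr Vi Vo) (τ : Pacing Vi) : Prop :=
  ∀ (ρi : Vi → RStream) (ρo : Vo → Option RStream), InCtx Γ ρi ρo →
    ∀ n ∈ PacingDen ρi τ, PExprDen ρi ρo e n ≠ none

/-- Semantic typing of specifications. -/
def SemTySpec {Vi Vo : Type} (Γ : Ctx Vi Vo) (S : List (Equ Vi Vo)) : Prop :=
  ∀ (ρi : Vi → RStream) (ρ₁ : Vo → Option RStream), InCtx Γ ρi ρ₁ →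
    ∃ ρ₂ : Vo → RStream, SatSpec S ρi (totalize ρ₁ ρ₂)

lemma prev_ne_none {w : RStream} {n : ℕ} {v : Option ℤ}
    (hw : w n ≠ none) (hv : v ≠ none) : Prev w n v ≠ none := by
  unfold Prev
  cases hwn : w n with
  | none => exact absurd hwn hw
  | some a =>
    cases n with
    | zero => simpa using hv
    | succ m => cases hL : Last w m <;> simp [hL, hv]

lemma hold_ne_none {w : RStream} {n : ℕ} {v : Option ℤ}
    (hv : v ≠ none) : Hold w n v ≠ none := by
  unfold Hold
  cases Last w n <;> simp [hv]

lemma semTyExpr_of_hasTy {Vi Vo : Type} {Γ : Ctx Vi Vo} {e : Expr Vi Vo} {τ : Pacing Vi}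
    (h : HasTy Γ e τ) : SemTyExpr Γ e τ := by
  intro ρi ρo hctx n
  induction h with
  | const => intro _; simp [PExprDen]
  | binop h1 h2 ih1 ih2 =>
    intro hn
    have := ih1 hn; have := ih2 hn
    simp only [PExprDen]
    cases h1 : PExprDen ρi ρo _ n <;> cases h2 : PExprDen ρi ρo _ n <;>
      simp_all [addOpt]
  | @directOut x τcan τ hx href =>
    intro hn
    rcases hctx x with ⟨h1, _⟩ | ⟨τ', w, h1, h2, h3⟩
    · rw [hx] at h1; exact absurd h1 (by simp)
    · rw [hx] at h1
      injection h1 with h1; subst h1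
      have hn' : n ∈ PacingDen ρi τcan := href ρi hn
      simpa [PExprDen, h2, getStream, Option.getD] using (h3 n).mp hn'
  | @directIn x τ href =>
    intro hn
    exact href ρi hn
  | @prevOut x τcan e τ hx he href ih =>
    intro hn
    rcases hctx x with ⟨h1, _⟩ | ⟨τ', w, h1, h2, h3⟩
    · rw [hx] at h1; exact absurd h1 (by simp)
    · rw [hx] at h1
      injection h1 with h1; subst h1
      have hwn : w n ≠ none := (h3 n).mp (href ρi hn)
      simpa [PExprDen, h2, getStream, Option.getD] using prev_ne_none hwn (ih hn)
  | @prevIn x e τ he href ih =>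
    intro hn
    exact prev_ne_none (href ρi hn) (ih hn)
  | @holdOut x e τ hx he ih =>
    intro hn
    exact hold_ne_none (ih hn)
  | @holdIn x e τ he ih =>
    intro hn
    exact hold_ne_none (ih hn)

lemma pexpr_eq {Vi Vo : Type} {Γ : Ctx Vi Vo} {e : Expr Vi Vo} {τ : Pacing Vi}
    (h : HasTy Γ e τ) (ρi : Vi → RStream) (ρ₁ : Vo → Option RStream)
    (hctx : InCtx Γ ρi ρ₁) (ρ₂ : Vo → RStream) :
    ∀ n, PExprDen ρi ρ₁ e n = ExprDen ρi (totalize ρ₁ ρ₂) e n := by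
  have key : ∀ x : Vo, (Γ x).isSome → getStream (ρ₁ x) = totalize ρ₁ ρ₂ x := by
    intro x hx
    rcases hctx x with ⟨h1, _⟩ | ⟨τ', w, h1, h2, _⟩
    · rw [h1] at hx; simp at hx
    · simp [h2, getStream, totalize, Option.getD]
  induction h with
  | const => intro n; rfl
  | binop h1 h2 ih1 ih2 =>
    intro n; simp only [PExprDen, ExprDen, ih1, ih2]
  | @directOut x τcan τ hx href =>
    intro n
    simp only [PExprDen, ExprDen]
    rw [key x (by simp [hx])]
  | directIn _ => intro n; rfl
  | @prevOut x τcan e τ hx he href ih =>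
    intro n
    simp only [PExprDen, ExprDen, ih]
    rw [key x (by simp [hx])]
  | prevIn he href ih =>
    intro n; simp only [PExprDen, ExprDen, ih]
  | @holdOut x e τ hx he ih =>
    intro n
    simp only [PExprDen, ExprDen, ih]
    rw [key x hx]
  | holdIn he ih =>
    intro n; simp only [PExprDen, ExprDen, ih]

theorem sound_typing_spec {Vi Vo : Type} [DecidableEq Vo] (Γ : Ctx Vi Vo)
    (S : List (Equ Vi Vo)) (h : SpecTy Γ S) : SemTySpec Γ S := by
  induction h with
  | empty =>
    intro ρi ρ₁ _
    exact ⟨fun _ _ => none, fun eq h => absurd h List.not_mem_nil⟩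
  | @equation Γ x τ e S hΓx hty _ ih =>
    intro ρi ρ₁ hctx
    classical
    have hsem := semTyExpr_of_hasTy hty ρi ρ₁ hctx
    set w : RStream := fun n => if n ∈ PacingDen ρi τ then PExprDen ρi ρ₁ e n else none
      with hwdef
    have hwp : w ∈ WellPaced τ ρi := by
      intro n
      constructor
      · intro hn
        simp only [hwdef, if_pos hn]
        exact hsem n hn
      · intro hne
        by_contra hn
        simp [hwdef, if_neg hn] at hne
    have h1 : ρ₁ x = none := by
      rcases hctx x with ⟨_, h2⟩ | ⟨τ', w', h2, _, _⟩
      · exact h2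
      · rw [hΓx] at h2; exact absurd h2 (by simp)
    have hctx' : InCtx (Function.update Γ x (some τ)) ρi (Function.update ρ₁ x (some w)) := by
      intro y
      by_cases hy : y = x
      · subst hy
        right; exact ⟨τ, w, Function.update_self _ _ _, by simp, hwp⟩
      · rcases hctx y with ⟨h2, h3⟩ | ⟨τ', w', h2, h3, h4⟩
        · left; exact ⟨(Function.update_of_ne hy _ _).trans h2, (Function.update_of_ne hy _ _).trans h3⟩
        · right; exact ⟨τ', w', (Function.update_of_ne hy _ _).trans h2,
            by simp [Function.update_of_ne hy, h3], h4⟩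
    obtain ⟨ρ₂, hsat⟩ := ih ρi _ hctx'
    have heqtot : totalize (Function.update ρ₁ x (some w)) ρ₂
        = totalize ρ₁ (Function.update ρ₂ x w) := by
      funext y
      by_cases hy : y = x
      · subst hy; simp [totalize, h1]
      · simp [totalize, Function.update_of_ne hy]
    refine ⟨Function.update ρ₂ x w, ?_⟩
    intro eq heq'
    rcases List.mem_cons.mp heq' with rfl | hmem
    · have hox : totalize ρ₁ (Function.update ρ₂ x w) x = w := by
        simp [totalize, h1]
      constructor
      · show totalize ρ₁ (Function.update ρ₂ x w) x ∈ WellPaced τ ρi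
        rw [hox]; exact hwp
      · show LessDef (totalize ρ₁ (Function.update ρ₂ x w) x) _
        rw [hox]
        intro n
        by_cases hn : n ∈ PacingDen ρi τ
        · right
          simp only [hwdef, if_pos hn]
          exact pexpr_eq hty ρi ρ₁ hctx (Function.update ρ₂ x w) n
        · left; simp [hwdef, if_neg hn]
    · have := hsat eq hmem
      rwa [heqtot] at this
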